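/- Let u : [0, \infty) \to [0, \infty) be continuous, and let r > 0, M \geq 1, B \geq 0, \alpha < 0 and 0 < q < 1 with M B < 2(1 - q)|\alpha|. Suppose that for every t_1 \geq 0 such that u(\tau) \leq r^2 for all \tau \in [0, t_1], the estimate u(t_1) \leq M\big( e^{2\alpha t_1} u(0) + B \int_0^{t_1} e^{2\alpha(t_1-\tau)} u(\tau)\,d\tau \big) holds. If u(0) \leq q r^2 / M, then u(t) \leq r^2 for all t \geq 0, i.e., u never escapes the ball of radius r^2. -/

import Mathlib

open Topology Filter


/-- **No finite escape time** (escape-time argument in the proof of Theorem 4 of the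
paper). Let `u : [0,∞) → [0,∞)` be continuous, `r > 0`, `M ≥ 1`, `B ≥ 0`, `α < 0` and
`0 < q < 1` with `M B < 2(1-q)|α|`. Suppose that whenever `u(τ) ≤ r²` on `[0, t₁]`, the
integral estimate `u(t₁) ≤ M (e^{2αt₁} u(0) + B ∫₀^{t₁} e^{2α(t₁-τ)} u(τ) dτ)` holds.
If `u(0) ≤ q r² / M`, then `u(t) ≤ r²` for all `t ≥ 0`. -/
theorem no_finite_escape_time
    (u : ℝ → ℝ) (hu : ContinuousOn u (Set.Ici 0))
    (hnonneg : ∀ t, 0 ≤ t → 0 ≤ u t)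
    (r M B α q : ℝ) (hr : 0 < r) (hM : 1 ≤ M) (hB : 0 ≤ B) (hα : α < 0)
    (hq0 : 0 < q) (hq1 : q < 1)
    (hsmall : M * B < 2 * (1 - q) * |α|)
    (hbound : ∀ t₁, 0 ≤ t₁ → (∀ τ ∈ Set.Icc (0:ℝ) t₁, u τ ≤ r ^ 2) →
      u t₁ ≤ M * (Real.exp (2 * α * t₁) * u 0 +
        B * ∫ τ in (0:ℝ)..t₁, Real.exp (2 * α * (t₁ - τ)) * u τ))
    (h0 : u 0 ≤ q * r ^ 2 / M) :
    ∀ t, 0 ≤ t → u t ≤ r ^ 2 := by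
  by_contra hcon
  push_neg at hcon
  obtain ⟨t₀, ht₀0, ht₀⟩ := hcon
  set S : Set ℝ := {t | 0 ≤ t ∧ r ^ 2 < u t} with hSdef
  have hSne : S.Nonempty := ⟨t₀, ht₀0, ht₀⟩
  have hSbdd : BddBelow S := ⟨0, fun x hx => hx.1⟩
  set t₁ := sInf S with ht₁def
  have ht₁0 : 0 ≤ t₁ := le_csInf hSne (fun x hx => hx.1)
  -- before t₁, u ≤ r²
  have hle : ∀ τ, 0 ≤ τ → τ < t₁ → u τ ≤ r ^ 2 := by
    intro τ hτ0 hτlt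
    by_contra h
    push_neg at h
    exact absurd (csInf_le hSbdd ⟨hτ0, h⟩) (not_le.mpr hτlt)
  -- closed set containing S
  have hclosed : IsClosed (Set.Ici (0:ℝ) ∩ u ⁻¹' Set.Ici (r ^ 2)) :=
    hu.preimage_isClosed_of_isClosed isClosed_Ici isClosed_Ici
  have hge : r ^ 2 ≤ u t₁ := by
    have h1 : t₁ ∈ closure S := csInf_mem_closure hSne hSbdd
    have h2 : closure S ⊆ Set.Ici (0:ℝ) ∩ u ⁻¹' Set.Ici (r ^ 2) := by
      apply hclosed.closure_subset_iff.mpr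
      intro x hx
      exact ⟨hx.1, le_of_lt hx.2⟩
    exact (h2 h1).2
  have hM0 : (0:ℝ) < M := lt_of_lt_of_le one_pos hM
  have ht₁pos : 0 < t₁ := by
    rcases lt_or_eq_of_le ht₁0 with h | h
    · exact h
    · exfalso
      have hu0 : u 0 ≤ q * r ^ 2 / M := h0
      have : q * r ^ 2 / M ≤ q * r ^ 2 := by
        rw [div_le_iff₀ hM0]
        nlinarith [mul_pos hq0 (pow_pos hr 2)]
      rw [← h] at hge
      nlinarith [pow_pos hr 2]
  -- u t₁ ≤ r² by left continuity
  have hub : u t₁ ≤ r ^ 2 := by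
    have hne : (𝓝[Set.Ico 0 t₁] t₁).NeBot := by
      rw [← mem_closure_iff_nhdsWithin_neBot, closure_Ico (ne_of_lt ht₁pos)]
      exact ⟨ht₁0, le_refl t₁⟩
    have htend : Filter.Tendsto u (𝓝[Set.Ico 0 t₁] t₁) (𝓝 (u t₁)) :=
      ((hu t₁ ht₁0).mono Set.Ico_subset_Ici_self).tendsto
    refine le_of_tendsto htend ?_
    filter_upwards [self_mem_nhdsWithin] with x hx
    exact hle x hx.1 hx.2
  have hIcc : ∀ τ ∈ Set.Icc (0:ℝ) t₁, u τ ≤ r ^ 2 := by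
    intro τ hτ
    rcases lt_or_eq_of_le hτ.2 with h | h
    · exact hle τ hτ.1 h
    · rw [h]; exact hub
  have hkey := hbound t₁ ht₁0 hIcc
  -- integrability
  have hcontI : ContinuousOn (fun τ => Real.exp (2 * α * (t₁ - τ)) * u τ) (Set.Icc 0 t₁) := by
    apply ContinuousOn.mul
    · exact (Real.continuous_exp.comp (continuous_const.mul (continuous_const.sub continuous_id))).continuousOn
    · exact hu.mono (fun x hx => hx.1)
  have hint1 : IntervalIntegrable (fun τ => Real.exp (2 * α * (t₁ - τ)) * u τ)
      MeasureTheory.volume 0 t₁ := by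
    apply ContinuousOn.intervalIntegrable
    rwa [Set.uIcc_of_le ht₁0]
  have hint2 : IntervalIntegrable (fun τ => Real.exp (2 * α * (t₁ - τ)) * r ^ 2)
      MeasureTheory.volume 0 t₁ := by
    apply ContinuousOn.intervalIntegrable
    exact ((Real.continuous_exp.comp (continuous_const.mul (continuous_const.sub continuous_id))).mul continuous_const).continuousOn
  have hmono : (∫ τ in (0:ℝ)..t₁, Real.exp (2 * α * (t₁ - τ)) * u τ)
      ≤ ∫ τ in (0:ℝ)..t₁, Real.exp (2 * α * (t₁ - τ)) * r ^ 2 := by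
    apply intervalIntegral.integral_mono_on ht₁0 hint1 hint2
    intro x hx
    exact mul_le_mul_of_nonneg_left (hIcc x hx) (Real.exp_pos _).le
  -- compute ∫ exp(2α(t₁-τ)) dτ
  have hderiv : ∀ τ ∈ Set.uIcc (0:ℝ) t₁,
      HasDerivAt (fun τ => Real.exp (2 * α * (t₁ - τ)) / (-(2 * α)))
        (Real.exp (2 * α * (t₁ - τ))) τ := by
    intro τ _
    have h1 : HasDerivAt (fun τ : ℝ => 2 * α * (t₁ - τ)) (2 * α * (-1)) τ :=
      ((hasDerivAt_id τ).const_sub t₁).const_mul (2 * α)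
    have h2 := (h1.exp).div_const (-(2 * α))
    have hne : (2*α) ≠ 0 := ne_of_lt (by linarith)
    rw [show Real.exp (2 * α * (t₁ - τ)) = Real.exp (2 * α * (t₁ - τ)) * (2 * α * (-1)) / (-(2 * α)) by
      rw [eq_div_iff (neg_ne_zero.mpr hne)]; ring]
    exact h2
  have hval : (∫ τ in (0:ℝ)..t₁, Real.exp (2 * α * (t₁ - τ)))
      = Real.exp (2 * α * (t₁ - t₁)) / (-(2 * α)) - Real.exp (2 * α * (t₁ - 0)) / (-(2 * α)) := by
    apply intervalIntegral.integral_eq_sub_of_hasDerivAt hderiv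
    apply ContinuousOn.intervalIntegrable
    exact (Real.continuous_exp.comp (continuous_const.mul (continuous_const.sub continuous_id))).continuousOn
  have hconst : (∫ τ in (0:ℝ)..t₁, Real.exp (2 * α * (t₁ - τ)) * r ^ 2)
      = (Real.exp (2 * α * (t₁ - t₁)) / (-(2 * α)) - Real.exp (2 * α * (t₁ - 0)) / (-(2 * α))) * r ^ 2 := by
    rw [intervalIntegral.integral_mul_const, hval]
  have hexp1 : Real.exp (2 * α * (t₁ - t₁)) = 1 := by simp
  have hexp2 : Real.exp (2 * α * t₁) ≤ 1 := by
    apply Real.exp_le_one_iff.mpr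
    nlinarith
  have hexp2' : 0 < Real.exp (2 * α * t₁) := Real.exp_pos _
  have habs : |α| = -α := abs_of_neg hα
  rw [habs] at hsmall
  have h2α : 0 < -(2 * α) := by linarith
  -- assemble
  have hI : (∫ τ in (0:ℝ)..t₁, Real.exp (2 * α * (t₁ - τ)) * u τ)
      ≤ (1 - Real.exp (2 * α * t₁)) / (-(2 * α)) * r ^ 2 := by
    calc _ ≤ _ := hmono
    _ = (1 - Real.exp (2 * α * t₁)) / (-(2 * α)) * r ^ 2 := by
        rw [hconst, hexp1, show t₁ - (0:ℝ) = t₁ by ring]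
        ring
  have hu0 : 0 ≤ u 0 := hnonneg 0 le_rfl
  have hfinal : u t₁ < r ^ 2 := by
    have e1 : M * Real.exp (2 * α * t₁) * u 0 ≤ q * r ^ 2 := by
      have : u 0 ≤ q * r ^ 2 / M := h0
      calc M * Real.exp (2 * α * t₁) * u 0 ≤ M * 1 * u 0 := by
            exact mul_le_mul_of_nonneg_right (mul_le_mul_of_nonneg_left hexp2 hM0.le) hu0
        _ = M * u 0 := by ring
        _ ≤ M * (q * r ^ 2 / M) := mul_le_mul_of_nonneg_left this hM0.le
        _ = q * r ^ 2 := by field_simp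
    have e2 : M * B * ((1 - Real.exp (2 * α * t₁)) / (-(2 * α)) * r ^ 2) < (1 - q) * r ^ 2 := by
      have hfrac : (1 - Real.exp (2 * α * t₁)) / (-(2 * α)) ≤ 1 / (-(2 * α)) := by
        exact (div_le_div_iff_of_pos_right h2α).mpr (by linarith)
      have hrp : 0 < r ^ 2 := by positivity
      have hMB : 0 ≤ M * B := by positivity
      have : M * B * ((1 - Real.exp (2 * α * t₁)) / (-(2 * α)) * r ^ 2)
          ≤ M * B * (1 / (-(2 * α)) * r ^ 2) :=
        mul_le_mul_of_nonneg_left (mul_le_mul_of_nonneg_right hfrac hrp.le) hMB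
      have h2 : M * B * (1 / (-(2 * α)) * r ^ 2) < (1 - q) * r ^ 2 := by
        rw [show M * B * (1 / (-(2 * α)) * r ^ 2) = (M * B * r ^ 2) / (-(2 * α)) by ring,
          div_lt_iff₀ h2α]
        nlinarith
      linarith
    have hInn : 0 ≤ ∫ τ in (0:ℝ)..t₁, Real.exp (2 * α * (t₁ - τ)) * u τ := by
      apply intervalIntegral.integral_nonneg ht₁0
      intro x hx
      exact mul_nonneg (Real.exp_pos _).le (hnonneg x hx.1)
    calc u t₁ ≤ M * (Real.exp (2 * α * t₁) * u 0 +
        B * ∫ τ in (0:ℝ)..t₁, Real.exp (2 * α * (t₁ - τ)) * u τ) := hkey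
      _ = M * Real.exp (2 * α * t₁) * u 0 + M * B * (∫ τ in (0:ℝ)..t₁, Real.exp (2 * α * (t₁ - τ)) * u τ) := by ring
      _ ≤ q * r ^ 2 + M * B * ((1 - Real.exp (2 * α * t₁)) / (-(2 * α)) * r ^ 2) := by
          have hMB : 0 ≤ M * B := by positivity
          have := mul_le_mul_of_nonneg_left hI hMB
          linarith
      _ < q * r ^ 2 + (1 - q) * r ^ 2 := by linarith
      _ = r ^ 2 := by ring
  linarith
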